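/- For every n ≥ 1, there is a language L_n over an alphabet of size n+2 recognized by a semantically deterministic transition-based nondeterministic co-Büchi automaton with 3n+3 states, such that every history-deterministic transition-based nondeterministic co-Büchi automaton recognizing L_n has at least 2^n states. -/

import Mathlib

open Filter

variable {A Q : Type}

/-- Extension of a transition function to sets of states and finite words. -/
def extSet (δ : Q → A → Set Q) : Set Q → List A → Set Q
  | S, [] => S
  | S, a :: u => extSet δ (⋃ q ∈ S, δ q a) u

/-- A nondeterministic automaton on finite words (NFW), with a total
transition function. -/
structure NFW (A Q : Type) where
  init : Set Q
  δ : Q → A → Set Q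
  F : Set Q
  init_nonempty : init.Nonempty
  δ_nonempty : ∀ q a, (δ q a).Nonempty

/-- The language of finite words recognized by an NFW. -/
def NFW.Lang (N : NFW A Q) : Set (List A) :=
  {u | ∃ q ∈ extSet N.δ N.init u, q ∈ N.F}

/-- A transition-based nondeterministic co-Büchi automaton (tNCW). -/
structure tNCW (A Q : Type) where
  init : Set Q
  δ : Q → A → Set Q
  α : Set (Q × A × Q)
  init_nonempty : init.Nonempty
  δ_nonempty : ∀ q a, (δ q a).Nonempty

namespace tNCW

/-- `L(A^q)`: words having a run from `q` traversing `α`-transitions only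
finitely often. -/
def LangFrom (M : tNCW A Q) (q : Q) : Set (ℕ → A) :=
  {w | ∃ r : ℕ → Q, r 0 = q ∧ (∀ i, r (i + 1) ∈ M.δ (r i) (w i)) ∧
    ∀ᶠ i in atTop, (r i, w i, r (i + 1)) ∉ M.α}

def Lang (M : tNCW A Q) : Set (ℕ → A) :=
  {w | ∃ q ∈ M.init, w ∈ M.LangFrom q}

/-- Semantic determinism. -/
def SD (M : tNCW A Q) : Prop :=
  (∀ q₁ ∈ M.init, ∀ q₂ ∈ M.init, M.LangFrom q₁ = M.LangFrom q₂) ∧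
  ∀ q a, ∀ q₁ ∈ M.δ q a, ∀ q₂ ∈ M.δ q a, M.LangFrom q₁ = M.LangFrom q₂

end tNCW

/-- `w` has a suffix in `($·R)^ω`: there is an infinite increasing sequence
`f` of `$`-positions (`$` is `none`) such that, between any two consecutive
ones, the letters spell a word of `R`. -/
def HasDollarRSuffix (R : Set (List A)) (w : ℕ → Option A) : Prop :=
  ∃ f : ℕ → ℕ, StrictMono f ∧ ∀ k, w (f k) = none ∧
    ∃ x ∈ R, (List.ofFn fun t : Fin (f (k + 1) - (f k + 1)) => w (f k + 1 + t)) = x.map some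

/-- `⋈_$(R)`: the words over `Σ ∪ {$}` that either contain finitely many
`$`'s or have a suffix in `($·R)^ω`. -/
def Bowtie (R : Set (List A)) : Set (ℕ → Option A) :=
  {w | (∀ N, ∃ i, N ≤ i ∧ w i = none) → HasDollarRSuffix R w}

/-- The prefix of length `k` of an infinite word. -/
def wordPrefix (w : ℕ → A) (k : ℕ) : List A := List.ofFn fun t : Fin k => w t

/-- A tNCW is history deterministic if some strategy `f : Σ* → Q`, consistent
with the transition function, induces an accepting run (traversing `α` only
finitely often) on every word of the language. -/
def tNCW.HD (M : tNCW A Q) : Prop :=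
  ∃ f : List A → Q, f [] ∈ M.init ∧ (∀ u a, f (u ++ [a]) ∈ M.δ (f u) a) ∧
    ∀ w ∈ M.Lang,
      ∀ᶠ i in atTop, (f (wordPrefix w i), w i, f (wordPrefix w (i + 1))) ∉ M.α

/-- The alphabet `Σ_n = [n] ∪ {#}` of size `n+1`; `Sum.inr ()` is `#`.
Together with `$` (`none` in `Option (SigC n)`), the full alphabet has size
`n+2`. -/
abbrev SigC (n : ℕ) := Fin n ⊕ Unit

/-- `R_n = {x·#·i : x ∈ [n]⁺ and i appears in x}`. -/
def RnC (n : ℕ) : Set (List (SigC n)) :=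
  {z | ∃ (x : List (Fin n)) (i : Fin n), x ≠ [] ∧ i ∈ x ∧
    z = x.map Sum.inl ++ [Sum.inr (), Sum.inl i]}

/-- `L_n = ⋈_$(R_n)`. -/
def LnC (n : ℕ) : Set (ℕ → Option (SigC n)) := Bowtie (RnC n)


namespace SDP

variable {A Q : Type}

/-- A finite run along `l` from `q` to `q'` using only non-α transitions. -/
def SafeRun (M : tNCW A Q) (q : Q) (l : List A) (q' : Q) : Prop :=
  ∃ p : ℕ → Q, p 0 = q ∧ p l.length = q' ∧
    ∀ t, (ht : t < l.length) → p (t + 1) ∈ M.δ (p t) l[t] ∧ (p t, l[t], p (t + 1)) ∉ M.α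

lemma SafeRun.nil (M : tNCW A Q) (q : Q) : SafeRun M q [] q :=
  ⟨fun _ => q, rfl, rfl, by simp⟩

lemma SafeRun.append {M : tNCW A Q} {q m q' : Q} {l₁ l₂ : List A}
    (h₁ : SafeRun M q l₁ m) (h₂ : SafeRun M m l₂ q') : SafeRun M q (l₁ ++ l₂) q' := by
  obtain ⟨p₁, hp₁0, hp₁e, hp₁s⟩ := h₁
  obtain ⟨p₂, hp₂0, hp₂e, hp₂s⟩ := h₂
  refine ⟨fun t => if t < l₁.length then p₁ t else p₂ (t - l₁.length), ?_, ?_, ?_⟩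
  · by_cases h : 0 < l₁.length
    · simpa [h] using hp₁0
    · have : l₁.length = 0 := by omega
      simp [this] at hp₁e ⊢
      rw [hp₂0, ← hp₁e, ← hp₁0]
  · simp only [List.length_append]
    have h : ¬ (l₁.length + l₂.length < l₁.length) := by omega
    simp only [h, if_false]
    simpa using hp₂e
  · intro t ht
    simp only [List.length_append] at ht
    by_cases h : t < l₁.length
    · have hl : (l₁ ++ l₂)[t] = l₁[t] := List.getElem_append_left (by omega)
      by_cases h' : t + 1 < l₁.length
      · simpa [h, h', hl] using hp₁s t h
      · have he : t + 1 = l₁.length := by omega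
        have : p₂ (t + 1 - l₁.length) = p₁ (t + 1) := by
          rw [he]; simp [hp₂0, ← hp₁e]
        simp only [h, if_true, h', if_false, hl, this]
        exact hp₁s t h
    · have hl : (l₁ ++ l₂)[t] = l₂[t - l₁.length] := List.getElem_append_right (by omega)
      have h' : ¬ (t + 1 < l₁.length) := by omega
      have he : t + 1 - l₁.length = (t - l₁.length) + 1 := by omega
      simp only [h, h', if_false, hl, he]
      exact hp₂s (t - l₁.length) (by omega)

/-- The run of a strategy `f` along a word with no α-steps is a SafeRun. -/
lemma safeRun_of_f {M : tNCW A Q} (f : List A → Q) (hf : ∀ u a, f (u ++ [a]) ∈ M.δ (f u) a)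
    (ctx l : List A)
    (hsafe : ∀ v a, v ++ [a] <+: l → (f (ctx ++ v), a, f (ctx ++ v ++ [a])) ∉ M.α) :
    SafeRun M (f ctx) l (f (ctx ++ l)) := by
  refine ⟨fun t => f (ctx ++ l.take t), by simp, by simp, ?_⟩
  intro t ht
  have h1 : l.take (t + 1) = l.take t ++ [l[t]] := by
    rw [List.take_succ, List.getElem?_eq_getElem ht]; rfl
  constructor
  · have := hf (ctx ++ l.take t) l[t]
    rwa [List.append_assoc, ← h1] at this
  · have hpre : l.take t ++ [l[t]] <+: l := by rw [← h1]; exact List.take_prefix _ _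
    have := hsafe (l.take t) l[t] hpre
    rwa [List.append_assoc ctx (l.take t) [l[t]], ← h1] at this

/-- A window of an infinite safe run gives a SafeRun. -/
lemma safeRun_of_run {M : tNCW A Q} (r : ℕ → Q) (w : ℕ → A) (s len : ℕ)
    (hstep : ∀ t < len, r (s + t + 1) ∈ M.δ (r (s + t)) (w (s + t)) ∧
      (r (s + t), w (s + t), r (s + t + 1)) ∉ M.α) :
    SafeRun M (r s) (List.ofFn fun t : Fin len => w (s + t)) (r (s + len)) := by
  refine ⟨fun t => r (s + t), rfl, by simp, ?_⟩
  intro t ht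
  simp only [List.length_ofFn] at ht
  have : (List.ofFn fun t : Fin len => w (s + t))[t] = w (s + t) := by
    simp [List.getElem_ofFn]
  rw [this]
  have := hstep t ht
  simpa [Nat.add_assoc] using this



/-- If a word has infinitely many pairs of consecutive `$`s whose gap is not
an `R_n` word, it is not in `L_n`. -/
lemma not_LnC {n : ℕ} (w : ℕ → Option (SigC n))
    (hbad : ∀ N, ∃ a b, N ≤ a ∧ a < b ∧ w a = none ∧ w b = none ∧
      (∀ m, a < m → m < b → w m ≠ none) ∧
      ¬ ∃ x ∈ RnC n, (List.ofFn fun t : Fin (b - (a + 1)) => w (a + 1 + t)) = x.map some) :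
    w ∉ LnC n := by
  intro hw
  have hinf : ∀ N, ∃ i, N ≤ i ∧ w i = none := by
    intro N
    obtain ⟨a, b, hNa, _, hwa, _⟩ := hbad N
    exact ⟨a, hNa, hwa⟩
  obtain ⟨g, hg, hgspec⟩ := hw hinf
  have hcover : ∀ i, g 0 ≤ i → w i = none → ∃ k, i = g k := by
    intro i hi hwi
    have hex : ∃ k, i < g (k + 1) := by
      refine ⟨i, lt_of_lt_of_le (Nat.lt_succ_self i) ?_⟩
      exact hg.le_apply
    classical
    set k := Nat.find hex with hk
    have hik : i < g (k + 1) := Nat.find_spec hex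
    have hgk : g k ≤ i := by
      rcases Nat.eq_zero_or_pos k with h0 | hpos
      · rw [h0]; exact hi
      · obtain ⟨k', hks⟩ := Nat.exists_eq_succ_of_ne_zero (by omega : k ≠ 0)
        have hklt : k' < Nat.find hex := by rw [← hk]; omega
        have := Nat.find_min hex hklt
        have hgi : ¬ i < g (k' + 1) := this
        have : k' + 1 = k := by omega
        rw [this] at hgi
        omega
    rcases eq_or_lt_of_le hgk with heq | hlt
    · exact ⟨k, heq.symm⟩
    · exfalso
      obtain ⟨x, _, hxeq⟩ := (hgspec k).2
      have hxlen : g (k + 1) - (g k + 1) = x.length := by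
        have := congrArg List.length hxeq
        simpa using this
      set t := i - (g k + 1) with ht
      have htlt : t < g (k + 1) - (g k + 1) := by omega
      have e := congrArg (fun l => l.getD t none) hxeq
      have eL : (List.ofFn fun s : Fin (g (k + 1) - (g k + 1)) => w (g k + 1 + ↑s)).getD t none
          = w (g k + 1 + t) := by
        rw [List.getD_eq_getElem _ _ (by simpa using htlt)]
        simp
      have eR : (x.map some).getD t none = some (x[t]'(by omega)) := by
        rw [List.getD_eq_getElem _ _ (by simpa using (by omega : t < x.length))]
        simp
      rw [eL, eR] at e
      have hit : g k + 1 + t = i := by omega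
      rw [hit, hwi] at e
      exact Option.some_ne_none _ e.symm
  obtain ⟨a, b, hNa, hab, hwa, hwb, hbtw, hnotR⟩ := hbad (g 0)
  obtain ⟨k, hk⟩ := hcover a hNa hwa
  obtain ⟨k', hk'⟩ := hcover b (le_trans hNa hab.le) hwb
  have hkk : k < k' := by
    have : g k < g k' := by rw [← hk, ← hk']; exact hab
    exact hg.lt_iff_lt.mp this
  have hk1 : k' = k + 1 := by
    by_contra hne
    have h2 : k + 1 < k' := by omega
    have hbet : g k < g (k + 1) ∧ g (k + 1) < g k' := ⟨hg (Nat.lt_succ_self k), hg h2⟩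
    exact hbtw (g (k + 1)) (hk ▸ hbet.1) (hk' ▸ hbet.2) (hgspec (k + 1)).1
  apply hnotR
  rw [hk, hk', hk1]
  exact (hgspec k).2

section Loop

variable {A Q : Type}

/-- The infinite word `u' · V^ω`. -/
def wordOfLoop (u' V : List A) (d : A) : ℕ → A := fun i =>
  if h : i < u'.length then u'[i] else V.getD ((i - u'.length) % V.length) d

lemma wordOfLoop_spec (u' V : List A) (d : A) (m j : ℕ) (hj : j < V.length) :
    wordOfLoop u' V d (u'.length + (m * V.length + j)) = V[j] := by
  have h1 : ¬ (u'.length + (m * V.length + j) < u'.length) := by omega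
  have h2 : u'.length + (m * V.length + j) - u'.length = m * V.length + j := by omega
  have h3 : (m * V.length + j) % V.length = j := by
    rw [mul_comm, Nat.mul_add_mod]
    exact Nat.mod_eq_of_lt hj
  simp only [wordOfLoop, h1, dif_neg, not_false_iff, h2, h3]
  exact List.getD_eq_getElem V d hj

lemma loopLang {M : tNCW A Q} (f : List A → Q) (hf0 : f [] ∈ M.init)
    (hf : ∀ u a, f (u ++ [a]) ∈ M.δ (f u) a) (u' V : List A) (hVne : V ≠ [])
    (hV : SDP.SafeRun M (f u') V (f u')) (d : A) : wordOfLoop u' V d ∈ M.Lang := by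
  obtain ⟨ρ, hρ0, hρe, hρs⟩ := hV
  have hVpos : 0 < V.length := List.length_pos_iff.mpr hVne
  set L := u'.length with hL
  set r : ℕ → Q := fun i => if i < L then f (u'.take i) else ρ ((i - L) % V.length) with hr
  have hrlow : ∀ i, i ≤ L → r i = f (u'.take i) := by
    intro i hi
    by_cases hlt : i < L
    · simp [hr, hlt]
    · have hie : i = L := by omega
      simp only [hr, hlt, if_false, hie, Nat.sub_self, Nat.zero_mod, hρ0, hL]
      rw [List.take_length, if_neg (lt_irrefl _)]
  have hrhigh : ∀ i, L ≤ i → r i = ρ ((i - L) % V.length) := by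
    intro i hi
    by_cases h1 : i < L
    · omega
    · simp [hr, h1]
  have claim : ∀ i, r (i + 1) ∈ M.δ (r i) (wordOfLoop u' V d i) ∧
      (L ≤ i → (r i, wordOfLoop u' V d i, r (i + 1)) ∉ M.α) := by
    intro i
    by_cases hiL : i < L
    · have hw : wordOfLoop u' V d i = u'[i] := by simp [wordOfLoop, ← hL, hiL]
      have h1 : r i = f (u'.take i) := hrlow i hiL.le
      have h2 : r (i + 1) = f (u'.take (i + 1)) := hrlow (i + 1) hiL
      have h3 : u'.take (i + 1) = u'.take i ++ [u'[i]] := by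
        rw [List.take_succ, List.getElem?_eq_getElem hiL]; rfl
      constructor
      · rw [h1, h2, h3, hw]
        exact hf (u'.take i) u'[i]
      · intro hLi; omega
    · push_neg at hiL
      set j := i - L with hj
      set jm := j % V.length with hjm
      have hjmlt : jm < V.length := Nat.mod_lt _ hVpos
      have hw : wordOfLoop u' V d i = V[jm] := by
        have h1 : ¬ (i < L) := by omega
        simp only [wordOfLoop, ← hL, h1, dif_neg, not_false_iff, ← hj, ← hjm]
        exact List.getD_eq_getElem V d hjmlt
      have h1 : r i = ρ jm := by rw [hrhigh i hiL, ← hj, ← hjm]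
      have hjdecomp : j = V.length * (j / V.length) + jm := by
        rw [hjm]; exact (Nat.div_add_mod j V.length).symm
      have h2 : r (i + 1) = ρ (jm + 1) := by
        have hik : i + 1 - L = j + 1 := by omega
        have hr2 : r (i + 1) = ρ ((j + 1) % V.length) := by
          rw [hrhigh (i + 1) (by omega), hik]
        rcases eq_or_lt_of_le (Nat.succ_le_of_lt hjmlt) with heq | hlt
        · have hz : (j + 1) % V.length = 0 := by
            rw [show j + 1 = V.length * (j / V.length) + V.length by omega,
              Nat.mul_add_mod, Nat.mod_self]
          rw [hr2, hz, hρ0, show jm + 1 = V.length from heq]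
          exact hρe.symm
        · have hz : (j + 1) % V.length = jm + 1 := by
            rw [show j + 1 = V.length * (j / V.length) + (jm + 1) by omega,
              Nat.mul_add_mod]
            exact Nat.mod_eq_of_lt hlt
          rw [hr2, hz]
      rw [h1, h2, hw]
      exact ⟨(hρs jm hjmlt).1, fun _ => (hρs jm hjmlt).2⟩
  refine ⟨f [], hf0, r, ?_, fun i => (claim i).1, ?_⟩
  · have := hrlow 0 (Nat.zero_le L)
    simpa using this
  · rw [Filter.eventually_atTop]
    exact ⟨L, fun i hi => (claim i).2 hi⟩

end Loop

lemma parse_unique {n : ℕ} : ∀ (y z : List (Fin n)) (i j : Fin n),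
    y.map Sum.inl ++ [Sum.inr (), Sum.inl i] = z.map Sum.inl ++ [Sum.inr (), Sum.inl j] →
    y = z ∧ i = j := by
  intro y
  induction y with
  | nil =>
    intro z i j h
    cases z with
    | nil => simp at h; exact ⟨rfl, h⟩
    | cons b z' => simp at h
  | cons a y' ih =>
    intro z i j h
    cases z with
    | nil => simp at h
    | cons b z' =>
      simp only [List.map_cons, List.cons_append, List.cons.injEq] at h
      obtain ⟨hab, hrest⟩ := h
      obtain ⟨hyz, hij⟩ := ih z' i j hrest
      exact ⟨by rw [Sum.inl.injEq] at hab; rw [hab, hyz], hij⟩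

/-- The central contradiction: a strategy-reachable state with a safe loop
containing a strictly bad gap between two `$`s contradicts `Lang = L_n`. -/
lemma splice_false {n : ℕ} {Q : Type} (M : tNCW (Option (SigC n)) Q)
    (hL : M.Lang = LnC n) (f : List (Option (SigC n)) → Q)
    (hf0 : f [] ∈ M.init) (hf : ∀ u a, f (u ++ [a]) ∈ M.δ (f u) a)
    (u' P₁ c P₂ : List (Option (SigC n)))
    (hV : SafeRun M (f u') (P₁ ++ none :: (c ++ none :: P₂)) (f u'))
    (hc1 : ∀ y ∈ c, y ≠ none)
    (hc2 : ¬ ∃ x ∈ RnC n, c = x.map some) : False := by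
  set V := P₁ ++ none :: (c ++ none :: P₂) with hVdef
  have hVne : V ≠ [] := by simp [hVdef]
  have hlenV : V.length = P₁.length + 1 + c.length + 1 + P₂.length := by
    simp [hVdef]
    omega
  have hmem := loopLang f hf0 hf u' V hVne hV none
  rw [hL] at hmem
  refine not_LnC _ ?_ hmem
  intro N
  set L := u'.length with hLdef
  have hv1 : V.getD P₁.length none = none := by
    rw [hVdef, List.getD_append_right _ _ _ _ (le_refl _)]
    simp
  have hv2 : ∀ t, t < c.length → V.getD (P₁.length + 1 + t) none = c.getD t none := by
    intro t ht
    rw [hVdef, List.getD_append_right _ _ _ _ (by omega)]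
    have h1 : P₁.length + 1 + t - P₁.length = t + 1 := by omega
    rw [h1]
    simp only [List.getD_cons_succ]
    exact List.getD_append _ _ _ _ ht
  have hv3 : V.getD (P₁.length + 1 + c.length) none = none := by
    rw [hVdef, List.getD_append_right _ _ _ _ (by omega)]
    have h1 : P₁.length + 1 + c.length - P₁.length = c.length + 1 := by omega
    rw [h1]
    simp only [List.getD_cons_succ]
    rw [List.getD_append_right _ _ _ _ (le_refl _)]
    simp
  have w_at : ∀ m j, j < V.length →
      wordOfLoop u' V none (L + (m * V.length + j)) = V.getD j none := by
    intro m j hj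
    rw [wordOfLoop_spec u' V none m j hj, List.getD_eq_getElem _ _ hj]
  have hNlen : N ≤ N * V.length := Nat.le_mul_of_pos_right N (by omega)
  refine ⟨L + (N * V.length + P₁.length), L + (N * V.length + (P₁.length + 1 + c.length)),
    by omega, by omega, ?_, ?_, ?_, ?_⟩
  · rw [w_at N P₁.length (by omega)]; exact hv1
  · rw [w_at N (P₁.length + 1 + c.length) (by omega)]; exact hv3
  · intro m hma hmb
    set t := m - (L + (N * V.length + P₁.length)) - 1 with htdef
    have htc : t < c.length := by omega
    have hm : m = L + (N * V.length + (P₁.length + 1 + t)) := by omega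
    rw [hm, w_at _ _ (by omega), hv2 t htc, List.getD_eq_getElem _ _ htc]
    exact hc1 _ (List.getElem_mem htc)
  · rintro ⟨x, hx, heq⟩
    apply hc2
    refine ⟨x, hx, ?_⟩
    rw [← heq]
    symm
    apply List.ext_getElem
    · simp; omega
    · intro idx h1 h2
      simp only [List.getElem_ofFn]
      have h1' := h1
      simp only [List.length_ofFn] at h1'
      have hidx : idx < c.length := by omega
      have he : L + (N * V.length + P₁.length) + 1 + idx
          = L + (N * V.length + (P₁.length + 1 + idx)) := by omega
      rw [he, w_at _ _ (by omega), hv2 idx hidx, List.getD_eq_getElem _ _ hidx]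


section GoodBase

variable {n : ℕ} {Q : Type}

/-- Translate a list of `R_n`-cores into the word `x₁·$·x₂·$·…` (each core
followed by a `$`). -/
def FL (cs : List (List (SigC n))) : List (Option (SigC n)) :=
  (cs.map (fun c => c.map some ++ [none])).flatten

lemma FL_append (cs cs' : List (List (SigC n))) : FL (cs ++ cs') = FL cs ++ FL cs' := by
  simp [FL]

lemma FL_single (c : List (SigC n)) : FL [c] = c.map some ++ [none] := by
  simp [FL]

lemma getD_of_prefix {β : Type} {l₁ l₂ : List β} (h : l₁ <+: l₂) {i : ℕ} (hi : i < l₁.length)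
    (d : β) : l₂.getD i d = l₁.getD i d := by
  obtain ⟨t, rfl⟩ := h
  exact List.getD_append _ _ _ _ hi

lemma prefix_append_left {β : Type} (u : List β) {v w : List β} (h : v <+: w) :
    u ++ v <+: u ++ w := by
  obtain ⟨t, rfl⟩ := h
  exact ⟨t, by rw [List.append_assoc]⟩

/-- `u` is a good base for the strategy `f`: after `u`, the run of `f` on any
continuation consisting of good blocks never traverses an α-transition. -/
def GoodBase (M : tNCW (Option (SigC n)) Q) (f : List (Option (SigC n)) → Q)
    (u : List (Option (SigC n))) : Prop :=
  ∀ (cs : List (List (SigC n))), (∀ c ∈ cs, c ∈ RnC n) →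
    ∀ v a, v ++ [a] <+: FL cs → (f (u ++ v), a, f (u ++ v ++ [a])) ∉ M.α

lemma exists_goodBase (M : tNCW (Option (SigC n)) Q) (hL : M.Lang = LnC n)
    (f : List (Option (SigC n)) → Q)
    (hacc : ∀ w ∈ M.Lang, ∀ᶠ i in atTop,
      (f (wordPrefix w i), w i, f (wordPrefix w (i + 1))) ∉ M.α) :
    ∃ u, GoodBase M f u := by
  classical
  by_contra hno
  push_neg at hno
  have hstep : ∀ cs : List (List (SigC n)), ∃ (cs' : List (List (SigC n)))
      (v : List (Option (SigC n))) (a : Option (SigC n)),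
      (∀ c ∈ cs', c ∈ RnC n) ∧ cs' ≠ [] ∧ (v ++ [a] <+: FL cs') ∧
      (f ((none :: FL cs) ++ v), a, f ((none :: FL cs) ++ v ++ [a])) ∈ M.α := by
    intro cs
    have h := hno (none :: FL cs)
    unfold GoodBase at h
    push_neg at h
    obtain ⟨cs', hcs', v, a, hpre, hα⟩ := h
    refine ⟨cs', v, a, hcs', ?_, hpre, hα⟩
    intro hnil
    rw [hnil] at hpre
    have := hpre.length_le
    simp [FL] at this
  choose D Dv Da hD1 hDne hDpre hDα using hstep
  set step : List (List (SigC n)) → List (List (SigC n)) := fun cs => cs ++ D cs with hstepdef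
  set CS : ℕ → List (List (SigC n)) := fun k => step^[k] [] with hCSdef
  have CSsucc : ∀ k, CS (k + 1) = CS k ++ D (CS k) := by
    intro k
    simp only [hCSdef, Function.iterate_succ_apply', hstepdef]
  have hRn : ∀ k, ∀ c ∈ CS k, c ∈ RnC n := by
    intro k
    induction k with
    | zero => simp [hCSdef]
    | succ k ih =>
      rw [CSsucc k]
      intro c hc
      rcases List.mem_append.mp hc with h | h
      · exact ih c h
      · exact hD1 (CS k) c h
  have csChain : ∀ j k, j ≤ k → CS j <+: CS k := by
    intro j k hjk
    induction k with
    | zero => have : j = 0 := by omega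
              rw [this]
    | succ k ih =>
      by_cases h : j = k + 1
      · rw [h]
      · have := ih (by omega)
        exact this.trans (by rw [CSsucc k]; exact ⟨D (CS k), rfl⟩)
  have cslen : ∀ k, k ≤ (CS k).length := by
    intro k
    induction k with
    | zero => simp
    | succ k ih =>
      rw [CSsucc k]
      have : 1 ≤ (D (CS k)).length := List.length_pos_iff.mpr (hDne (CS k))
      simp only [List.length_append]
      omega
  -- the infinite words
  set u : ℕ → List (Option (SigC n)) := fun k => none :: FL (CS k) with hudef
  have usucc : ∀ k, u (k + 1) = u k ++ FL (D (CS k)) := by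
    intro k
    simp only [hudef, CSsucc k, FL_append]
    rfl
  have uchain : ∀ j k, j ≤ k → u j <+: u k := by
    intro j k hjk
    induction k with
    | zero => have : j = 0 := by omega
              rw [this]
    | succ k ih =>
      by_cases h : j = k + 1
      · rw [h]
      · exact (ih (by omega)).trans (by rw [usucc k]; exact ⟨FL (D (CS k)), rfl⟩)
  have FLlen : ∀ cs : List (List (SigC n)), cs.length ≤ (FL cs).length := by
    intro cs
    induction cs with
    | nil => simp [FL]
    | cons c cs ih =>
      have : FL (c :: cs) = (c.map some ++ [none]) ++ FL cs := by simp [FL]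
      rw [this]
      simp only [List.length_append, List.length_cons, List.length_map]
      omega
  have ulen : ∀ k, k + 1 ≤ (u k).length := by
    intro k
    have h1 := FLlen (CS k)
    have h2 := cslen k
    simp only [hudef, List.length_cons]
    omega
  set W : ℕ → Option (SigC n) := fun i => (u (i + 1)).getD i none with hWdef
  have agree : ∀ k i, i < (u k).length → W i = (u k).getD i none := by
    intro k i hi
    by_cases h : k ≤ i + 1
    · exact getD_of_prefix (uchain k (i + 1) h) hi none
    · have h2 : i < (u (i + 1)).length := by have := ulen (i + 1); omega
      exact (getD_of_prefix (uchain (i + 1) k (by omega)) h2 none).symm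
  have hwp : ∀ k (l : List (Option (SigC n))), l <+: u k → wordPrefix W l.length = l := by
    intro k l hpre
    have hlk : l.length ≤ (u k).length := hpre.length_le
    apply List.ext_getElem (by simp [wordPrefix])
    intro m h1 h2
    simp only [wordPrefix, List.length_ofFn] at h1
    simp only [wordPrefix, List.getElem_ofFn]
    rw [agree k m (by omega), getD_of_prefix hpre (by omega) none,
      List.getD_eq_getElem _ _ (by omega)]
  -- core stream
  set cj : ℕ → List (SigC n) := fun j => (CS (j + 1)).getD j [] with hcjdef
  have hcj : ∀ j k, j < k → (CS k).getD j [] = cj j := by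
    intro j k hjk
    by_cases h : k ≤ j + 1
    · have : k = j + 1 := by omega
      rw [this]
    · have hlt : j < (CS (j + 1)).length := by have := cslen (j + 1); omega
      exact (getD_of_prefix (csChain (j + 1) k (by omega)) hlt [])
  have hcjRn : ∀ j, cj j ∈ RnC n := by
    intro j
    have hlt : j < (CS (j + 1)).length := by have := cslen (j + 1); omega
    have : cj j = (CS (j + 1))[j] := List.getD_eq_getElem _ _ hlt
    rw [this]
    exact hRn (j + 1) _ (List.getElem_mem hlt)
  set B : ℕ → List (Option (SigC n)) := fun j => none :: FL (List.take j (CS j)) with hBdef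
  have Bsucc : ∀ j, B (j + 1) = B j ++ ((cj j).map some ++ [none]) := by
    intro j
    have hjlen : j < (CS (j + 1)).length := by have := cslen (j + 1); omega
    have h1 : List.take (j + 1) (CS (j + 1)) = List.take j (CS (j + 1)) ++ [(CS (j + 1))[j]] := by
      rw [List.take_succ, List.getElem?_eq_getElem hjlen]
      rfl
    have h2 : List.take j (CS (j + 1)) = List.take j (CS j) := by
      obtain ⟨t, ht⟩ := csChain j (j + 1) (by omega)
      rw [← ht, List.take_append_of_le_length (cslen j)]
    have h3 : (CS (j + 1))[j] = cj j := by
      rw [hcjdef]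
      exact (List.getD_eq_getElem _ [] hjlen).symm
    simp only [hBdef, h1, h2, h3, FL_append, FL_single]
    rfl
  have Bpos : ∀ j, 1 ≤ (B j).length := by intro j; simp [hBdef]
  set g : ℕ → ℕ := fun j => (B j).length - 1 with hgdef
  have glen : ∀ j, (B j).length = g j + 1 := by
    intro j
    have := Bpos j
    simp only [hgdef]
    omega
  have gsucc : ∀ j, g (j + 1) = g j + ((cj j).length + 1) := by
    intro j
    have h1 := glen j
    have h2 := glen (j + 1)
    rw [Bsucc j] at h2
    simp only [List.length_append, List.length_map, List.length_cons, List.length_nil] at h2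
    omega
  have gmono : StrictMono g := by
    apply strictMono_nat_of_lt_succ
    intro j
    rw [gsucc j]
    omega
  have Bpref : ∀ j, B j <+: u j := by
    intro j
    refine ⟨FL (List.drop j (CS j)), ?_⟩
    simp only [hBdef, hudef]
    rw [List.cons_append, ← FL_append, List.take_append_drop]
  have val_at : ∀ j m, m < (B j).length → W m = (B j).getD m none := by
    intro j m hm
    have h2 : m < (u j).length := lt_of_lt_of_le hm (Bpref j).length_le
    rw [agree j m h2]
    exact getD_of_prefix (Bpref j) hm none
  have Blast : ∀ j, (B j).getD (g j) none = none := by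
    intro j
    cases j with
    | zero => simp [hBdef, hgdef, FL]
    | succ j =>
      rw [Bsucc j]
      have h1 : g (j + 1) = (B j).length + (cj j).length := by
        rw [glen j, gsucc j]; omega
      rw [h1, List.getD_append_right _ _ _ _ (by omega)]
      have h2 : (B j).length + (cj j).length - (B j).length = (cj j).length := by omega
      rw [h2, List.getD_append_right _ _ _ _ (by simp)]
      simp
  have hWg : ∀ j, W (g j) = none := by
    intro j
    rw [val_at j (g j) (by rw [glen j]; omega)]
    exact Blast j
  have hseg : ∀ j, (List.ofFn fun t : Fin (g (j + 1) - (g j + 1)) => W (g j + 1 + t))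
      = (cj j).map some := by
    intro j
    have hlen : g (j + 1) - (g j + 1) = (cj j).length := by rw [gsucc j]; omega
    apply List.ext_getElem (by simpa using hlen)
    intro t h1 h2
    simp only [List.getElem_ofFn, List.getElem_map]
    have ht : t < (cj j).length := by simpa using h2
    have hpos : g j + 1 + t < (B (j + 1)).length := by
      rw [glen (j + 1), gsucc j]; omega
    rw [val_at (j + 1) _ hpos, Bsucc j,
      List.getD_append_right _ _ _ _ (by rw [glen j]; omega)]
    have h3 : g j + 1 + t - (B j).length = t := by rw [glen j]; omega
    rw [h3, List.getD_append _ _ _ _ (by simpa using ht),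
      List.getD_eq_getElem _ _ (by simpa using ht)]
    simp
  have hWLn : W ∈ LnC n := by
    intro _
    exact ⟨g, gmono, fun j => ⟨hWg j, cj j, hcjRn j, hseg j⟩⟩
  have hWLang : W ∈ M.Lang := by rw [hL]; exact hWLn
  obtain ⟨N, hN⟩ := Filter.eventually_atTop.mp (hacc W hWLang)
  -- the α-step produced at stage N
  set k := N with hkdef
  have hα := hDα (CS k)
  have hj₀ : (u k ++ Dv (CS k)).length = (u k).length + (Dv (CS k)).length := by
    simp
  have hpre1 : u k ++ Dv (CS k) ++ [Da (CS k)] <+: u (k + 1) := by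
    rw [usucc k, List.append_assoc]
    exact prefix_append_left (u k) (hDpre (CS k))
  have hpre0 : u k ++ Dv (CS k) <+: u (k + 1) := by
    have hstep0 : u k ++ Dv (CS k) <+: u k ++ Dv (CS k) ++ [Da (CS k)] := ⟨[Da (CS k)], rfl⟩
    exact hstep0.trans hpre1
  have e0 : wordPrefix W (u k ++ Dv (CS k)).length = u k ++ Dv (CS k) :=
    hwp (k + 1) _ hpre0
  have e1 : wordPrefix W ((u k ++ Dv (CS k)).length + 1) = u k ++ Dv (CS k) ++ [Da (CS k)] := by
    have := hwp (k + 1) _ hpre1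
    simpa [Nat.add_assoc] using this
  have e2 : W ((u k ++ Dv (CS k)).length) = Da (CS k) := by
    have hlt : (u k ++ Dv (CS k)).length < (u (k + 1)).length := by
      have := hpre1.length_le
      simp only [List.length_append, List.length_cons] at this ⊢
      simp at this
      omega
    rw [agree (k + 1) _ hlt, getD_of_prefix hpre1 (by simp) none,
      List.getD_append_right _ _ _ _ (le_refl _)]
    simp
  have hsafe := hN ((u k ++ Dv (CS k)).length) (by
    have := ulen k
    simp only [List.length_append]
    omega)
  rw [e0, e1, e2] at hsafe
  apply hsafe
  have : u k = none :: FL (CS k) := rfl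
  rw [this]
  exact hα

end GoodBase

section Chk

variable {n : ℕ} {Q : Type}

noncomputable def ltr (i : Fin n) : Option (SigC n) := some (Sum.inl i)
noncomputable def hsh : Option (SigC n) := some (Sum.inr ())

noncomputable def xW (S : Finset (Fin n)) : List (Option (SigC n)) := S.toList.map (fun i => ltr i)

noncomputable def xCore (S : Finset (Fin n)) (k : Fin n) : List (SigC n) :=
  S.toList.map Sum.inl ++ [Sum.inr (), Sum.inl k]

lemma xCore_mem_RnC (S : Finset (Fin n)) (hS : S.Nonempty) (k : Fin n) (hk : k ∈ S) :
    xCore S k ∈ RnC n := by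
  refine ⟨S.toList, k, ?_, ?_, rfl⟩
  · simp [Finset.toList_eq_nil]
    exact hS.ne_empty
  · rwa [Finset.mem_toList]

lemma xCore_map (S : Finset (Fin n)) (k : Fin n) :
    (xCore S k).map some = xW S ++ [hsh, ltr k] := by
  simp [xCore, xW, hsh, ltr, Function.comp]

noncomputable def legWord (S : Finset (Fin n)) (k : Fin n) : List (Option (SigC n)) :=
  ltr k :: none :: (xW S ++ [hsh])

def GoodCtx (S : Finset (Fin n)) (v : List (Option (SigC n))) : Prop :=
  ∃ cs : List (List (SigC n)), (∀ c ∈ cs, c ∈ RnC n) ∧ v = FL cs ++ (xW S ++ [hsh])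

lemma ctx_fill (cs : List (List (SigC n))) (S : Finset (Fin n)) (j : Fin n) :
    (FL cs ++ (xW S ++ [hsh])) ++ [ltr j, none] = FL (cs ++ [xCore S j]) := by
  rw [FL_append, FL_single, xCore_map]
  simp [List.append_assoc]

lemma ctx_ext (cs : List (List (SigC n))) (S : Finset (Fin n)) (k : Fin n) :
    (FL cs ++ (xW S ++ [hsh])) ++ legWord S k = FL (cs ++ [xCore S k]) ++ (xW S ++ [hsh]) := by
  rw [FL_append, FL_single, xCore_map]
  simp [legWord, List.append_assoc]

def ChkX (f : List (Option (SigC n)) → Q) (u₀ : List (Option (SigC n)))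
    (S : Finset (Fin n)) : Set Q :=
  {q | ∃ v, GoodCtx S v ∧ f (u₀ ++ v) = q}

open Classical in
noncomputable def nextq (f : List (Option (SigC n)) → Q) (u₀ : List (Option (SigC n)))
    (S : Finset (Fin n)) (q : Q) (k : Fin n) : Q :=
  if h : q ∈ ChkX f u₀ S then f (u₀ ++ Classical.choose h ++ legWord S k) else q

variable {M : tNCW (Option (SigC n)) Q} {f : List (Option (SigC n)) → Q}
  {u₀ : List (Option (SigC n))}

lemma chkX_nonempty (f : List (Option (SigC n)) → Q) (u₀ : List (Option (SigC n)))
    (S : Finset (Fin n)) : (ChkX f u₀ S).Nonempty :=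
  ⟨f (u₀ ++ (xW S ++ [hsh])), ⟨xW S ++ [hsh], ⟨[], by simp, by simp [FL]⟩, rfl⟩⟩

/-- All single steps along a leg from a good context are α-free. -/
lemma leg_safe (hf : ∀ u a, f (u ++ [a]) ∈ M.δ (f u) a) (hGB : GoodBase M f u₀)
    {S : Finset (Fin n)} (hS : S.Nonempty) {v : List (Option (SigC n))} (hv : GoodCtx S v)
    (k : Fin n) (hk : k ∈ S) :
    SafeRun M (f (u₀ ++ v)) (legWord S k) (f ((u₀ ++ v) ++ legWord S k)) := by
  obtain ⟨cs, hcs, rfl⟩ := hv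
  obtain ⟨j₀, hj₀⟩ := hS
  apply safeRun_of_f f hf
  intro v' a hpre
  set w := FL ((cs ++ [xCore S k]) ++ [xCore S j₀]) with hwdef
  have hwgood : ∀ c ∈ (cs ++ [xCore S k]) ++ [xCore S j₀], c ∈ RnC n := by
    intro c hc
    simp only [List.mem_append, List.mem_singleton] at hc
    rcases hc with (hc | rfl) | rfl
    · exact hcs c hc
    · exact xCore_mem_RnC S ⟨j₀, hj₀⟩ k hk
    · exact xCore_mem_RnC S ⟨j₀, hj₀⟩ j₀ hj₀
  have hbig : (FL cs ++ (xW S ++ [hsh])) ++ legWord S k ++ [ltr j₀, none] = w := by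
    rw [hwdef, ← ctx_fill ((cs ++ [xCore S k])) S j₀, ← ctx_ext cs S k]
  have hpre2 : (FL cs ++ (xW S ++ [hsh])) ++ (v' ++ [a]) <+: w := by
    have h1 : (FL cs ++ (xW S ++ [hsh])) ++ (v' ++ [a]) <+:
        (FL cs ++ (xW S ++ [hsh])) ++ legWord S k := prefix_append_left _ hpre
    refine h1.trans ?_
    exact ⟨[ltr j₀, none], hbig⟩
  have := hGB _ hwgood ((FL cs ++ (xW S ++ [hsh])) ++ v') a (by
    rw [List.append_assoc]
    exact hpre2)
  simpa only [← List.append_assoc] using this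

lemma nextq_spec (hf : ∀ u a, f (u ++ [a]) ∈ M.δ (f u) a) (hGB : GoodBase M f u₀)
    {S : Finset (Fin n)} (hS : S.Nonempty) {q : Q} (hq : q ∈ ChkX f u₀ S)
    (k : Fin n) (hk : k ∈ S) :
    ∃ v, GoodCtx S v ∧ f (u₀ ++ v) = q ∧
      SafeRun M q [ltr k, none] (f ((u₀ ++ v) ++ [ltr k, none])) ∧
      SafeRun M (f ((u₀ ++ v) ++ [ltr k, none])) (xW S ++ [hsh]) (nextq f u₀ S q k) ∧
      nextq f u₀ S q k ∈ ChkX f u₀ S := by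
  have hv := Classical.choose_spec hq
  set v := Classical.choose hq with hvdef
  obtain ⟨hgc, hfv⟩ := hv
  have hrun : SafeRun M (f (u₀ ++ v)) (legWord S k) (f ((u₀ ++ v) ++ legWord S k)) :=
    leg_safe hf hGB hS hgc k hk
  have hsplit : legWord S k = [ltr k, none] ++ (xW S ++ [hsh]) := rfl
  -- split the leg run into two f-runs
  obtain ⟨cs, hcs, hveq⟩ := hgc
  have hnext : nextq f u₀ S q k = f ((u₀ ++ v) ++ legWord S k) := by
    unfold nextq
    rw [dif_pos hq, ← hvdef]
  have hrun1 : SafeRun M (f (u₀ ++ v)) [ltr k, none] (f ((u₀ ++ v) ++ [ltr k, none])) := by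
    apply safeRun_of_f f hf
    intro v' a hpre
    -- steps within a prefix of the leg are α-free; reuse leg_safe's bound
    have hpre' : v' ++ [a] <+: legWord S k := by
      rw [hsplit]
      exact hpre.trans (List.prefix_append _ _)
    obtain ⟨p, hp0, hpe, hps⟩ := hrun
    -- direct: use the GoodBase property again
    obtain ⟨j₀, hj₀⟩ := hS
    have hwgood : ∀ c ∈ (cs ++ [xCore S k]) ++ [xCore S j₀], c ∈ RnC n := by
      intro c hc
      simp only [List.mem_append, List.mem_singleton] at hc
      rcases hc with (hc | rfl) | rfl
      · exact hcs c hc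
      · exact xCore_mem_RnC S ⟨j₀, hj₀⟩ k hk
      · exact xCore_mem_RnC S ⟨j₀, hj₀⟩ j₀ hj₀
    have hbig : (FL cs ++ (xW S ++ [hsh])) ++ legWord S k ++ [ltr j₀, none]
        = FL ((cs ++ [xCore S k]) ++ [xCore S j₀]) := by
      rw [← ctx_fill ((cs ++ [xCore S k])) S j₀, ← ctx_ext cs S k]
    have hpre2 : (v ++ v') ++ [a] <+: FL ((cs ++ [xCore S k]) ++ [xCore S j₀]) := by
      rw [← hbig, ← hveq]
      have h1 : v ++ (v' ++ [a]) <+: v ++ legWord S k := prefix_append_left _ hpre'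
      rw [← List.append_assoc] at h1
      exact h1.trans ⟨[ltr j₀, none], rfl⟩
    have := hGB _ hwgood (v ++ v') a hpre2
    simpa only [← List.append_assoc] using this
  have hrun2 : SafeRun M (f ((u₀ ++ v) ++ [ltr k, none])) (xW S ++ [hsh])
      (nextq f u₀ S q k) := by
    rw [hnext]
    have : (u₀ ++ v) ++ legWord S k = ((u₀ ++ v) ++ [ltr k, none]) ++ (xW S ++ [hsh]) := by
      simp [hsplit, List.append_assoc]
    rw [this]
    apply safeRun_of_f f hf
    intro v' a hpre
    obtain ⟨j₀, hj₀⟩ := hS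
    have hwgood : ∀ c ∈ (cs ++ [xCore S k]) ++ [xCore S j₀], c ∈ RnC n := by
      intro c hc
      simp only [List.mem_append, List.mem_singleton] at hc
      rcases hc with (hc | rfl) | rfl
      · exact hcs c hc
      · exact xCore_mem_RnC S ⟨j₀, hj₀⟩ k hk
      · exact xCore_mem_RnC S ⟨j₀, hj₀⟩ j₀ hj₀
    have hbig : (FL cs ++ (xW S ++ [hsh])) ++ legWord S k ++ [ltr j₀, none]
        = FL ((cs ++ [xCore S k]) ++ [xCore S j₀]) := by
      rw [← ctx_fill ((cs ++ [xCore S k])) S j₀, ← ctx_ext cs S k]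
    have hpre' : ([ltr k, none] ++ v') ++ [a] <+: legWord S k := by
      rw [hsplit, List.append_assoc]
      exact prefix_append_left _ hpre
    have hpre2 : (v ++ ([ltr k, none] ++ v')) ++ [a] <+:
        FL ((cs ++ [xCore S k]) ++ [xCore S j₀]) := by
      rw [← hbig, ← hveq]
      have h1 : v ++ (([ltr k, none] ++ v') ++ [a]) <+: v ++ legWord S k :=
        prefix_append_left _ hpre'
      rw [← List.append_assoc] at h1
      exact h1.trans ⟨[ltr j₀, none], rfl⟩
    have := hGB _ hwgood (v ++ ([ltr k, none] ++ v')) a hpre2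
    simpa only [← List.append_assoc] using this
  refine ⟨v, ⟨cs, hcs, hveq⟩, hfv, ?_, hrun2, ?_⟩
  · rw [hfv] at hrun1; exact hrun1
  · refine ⟨v ++ legWord S k, ⟨cs ++ [xCore S k], ?_, ?_⟩, ?_⟩
    · intro c hc
      simp only [List.mem_append, List.mem_singleton] at hc
      rcases hc with hc | rfl
      · exact hcs c hc
      · exact xCore_mem_RnC S hS k hk
    · rw [hveq]; exact ctx_ext cs S k
    · rw [hnext, ← List.append_assoc]

end Chk

section Chk2

variable {n : ℕ} {Q : Type}
variable {M : tNCW (Option (SigC n)) Q} {f : List (Option (SigC n)) → Q}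
  {u₀ : List (Option (SigC n))}

def relS (f : List (Option (SigC n)) → Q) (u₀ : List (Option (SigC n)))
    (S : Finset (Fin n)) : Q → Q → Prop :=
  fun x y => x ∈ ChkX f u₀ S ∧ ∃ k ∈ S, nextq f u₀ S x k = y

def LegsFlat (S : Finset (Fin n)) (V : List (Option (SigC n))) : Prop :=
  ∃ ks : List (Fin n), (∀ k ∈ ks, k ∈ S) ∧ V = (ks.map (legWord S)).flatten

lemma step_safeRun (hf : ∀ u a, f (u ++ [a]) ∈ M.δ (f u) a) (hGB : GoodBase M f u₀)
    {S : Finset (Fin n)} (hS : S.Nonempty) {q : Q} (hq : q ∈ ChkX f u₀ S)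
    {k : Fin n} (hk : k ∈ S) :
    SafeRun M q (legWord S k) (nextq f u₀ S q k) := by
  obtain ⟨v, _, _, h1, h2, _⟩ := nextq_spec hf hGB hS hq k hk
  have := h1.append h2
  exact this

lemma reach_to_run (hf : ∀ u a, f (u ++ [a]) ∈ M.δ (f u) a) (hGB : GoodBase M f u₀)
    {S : Finset (Fin n)} (hS : S.Nonempty) {x y : Q}
    (h : Relation.ReflTransGen (relS f u₀ S) x y) :
    ∃ V, LegsFlat S V ∧ SafeRun M x V y := by
  induction h using Relation.ReflTransGen.head_induction_on with
  | refl => exact ⟨[], ⟨[], by simp, by simp⟩, SafeRun.nil M y⟩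
  | head h' _ ih =>
    obtain ⟨hmem, k, hk, hnext⟩ := h'
    obtain ⟨V, ⟨ks, hks, hVeq⟩, hrun⟩ := ih
    refine ⟨legWord S k ++ V, ⟨k :: ks, ?_, ?_⟩, ?_⟩
    · intro k' hk'
      rcases List.mem_cons.mp hk' with rfl | h
      · exact hk
      · exact hks k' h
    · simp [hVeq]
    · have h1 := step_safeRun hf hGB hS hmem hk
      rw [hnext] at h1
      exact h1.append hrun

lemma qS_exists [Fintype Q] (hf : ∀ u a, f (u ++ [a]) ∈ M.δ (f u) a) (hGB : GoodBase M f u₀)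
    (S : Finset (Fin n)) (hS : S.Nonempty) :
    ∃ p, p ∈ ChkX f u₀ S ∧
      ∀ k ∈ S, Relation.ReflTransGen (relS f u₀ S) (nextq f u₀ S p k) p := by
  classical
  set R : Q → Finset Q :=
    fun x => (Set.toFinite {y | Relation.ReflTransGen (relS f u₀ S) x y}).toFinset with hR
  have hne : ((Set.toFinite (ChkX f u₀ S)).toFinset).Nonempty := by
    rw [Set.Finite.toFinset_nonempty]
    exact chkX_nonempty f u₀ S
  obtain ⟨p, hp, hmin⟩ := Finset.exists_min_image _ (fun x => (R x).card) hne
  rw [Set.Finite.mem_toFinset] at hp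
  refine ⟨p, hp, ?_⟩
  intro k hk
  set b := nextq f u₀ S p k with hb
  have hbmem : b ∈ ChkX f u₀ S := by
    obtain ⟨v, _, _, _, _, h⟩ := nextq_spec hf hGB hS hp k hk
    exact h
  have hedge : relS f u₀ S p b := ⟨hp, k, hk, rfl⟩
  have hsub : R b ⊆ R p := by
    intro y hy
    rw [hR, Set.Finite.mem_toFinset] at hy ⊢
    exact Relation.ReflTransGen.head hedge hy
  have hcard : (R p).card ≤ (R b).card := by
    apply hmin
    rw [Set.Finite.mem_toFinset]
    exact hbmem
  have heq : R b = R p := Finset.eq_of_subset_of_card_le hsub hcard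
  have hpRp : p ∈ R p := by
    rw [hR, Set.Finite.mem_toFinset]
    exact Relation.ReflTransGen.refl
  rw [← heq, hR, Set.Finite.mem_toFinset] at hpRp
  exact hpRp

lemma legs_last (S : Finset (Fin n)) {ks : List (Fin n)} (hks : ∀ k ∈ ks, k ∈ S)
    (hne : ks ≠ []) :
    ∃ Z kl, kl ∈ S ∧ (ks.map (legWord S)).flatten = Z ++ legWord S kl := by
  rcases List.eq_nil_or_concat ks with rfl | ⟨ks₀, kl, rfl⟩
  · exact absurd rfl hne
  · refine ⟨(ks₀.map (legWord S)).flatten, kl, hks kl (by simp), ?_⟩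
    simp

lemma not_none_mem_cword (S : Finset (Fin n)) (k : Fin n) :
    ∀ y ∈ xW S ++ [hsh, ltr k], y ≠ none := by
  intro y hy
  rcases List.mem_append.mp hy with h | h
  · obtain ⟨i, _, rfl⟩ := List.mem_map.mp h
    simp [ltr]
  · rcases List.mem_cons.mp h with rfl | h
    · simp [hsh]
    · rcases List.mem_singleton.mp h with rfl
      simp [ltr]

lemma cword_not_Rn (S : Finset (Fin n)) (k : Fin n) (hk : k ∉ S) :
    ¬ ∃ x ∈ RnC n, (xW S ++ [hsh, ltr k] : List (Option (SigC n))) = x.map some := by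
  rintro ⟨x, ⟨y, i, hy0, hiy, rfl⟩, hceq⟩
  have h1 : (xCore S k).map some = (y.map Sum.inl ++ [Sum.inr (), Sum.inl i]).map some := by
    rw [xCore_map]; exact hceq
  have h2 : xCore S k = y.map Sum.inl ++ [Sum.inr (), Sum.inl i] :=
    List.map_injective_iff.mpr (Option.some_injective _) h1
  obtain ⟨hyz, hik⟩ := parse_unique S.toList y k i h2
  apply hk
  rw [hik, ← Finset.mem_toList, hyz]
  exact hiy

lemma single_not_Rn (k : Fin n) :
    ¬ ∃ x ∈ RnC n, ([ltr k] : List (Option (SigC n))) = x.map some := by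
  rintro ⟨x, ⟨y, i, hy0, hiy, rfl⟩, hceq⟩
  have := congrArg List.length hceq
  simp [ltr] at this

/-- Distinctness of the checker states for different alphabets. -/
lemma distinct_A (hL : M.Lang = LnC n) (hf0 : f [] ∈ M.init)
    (hf : ∀ u a, f (u ++ [a]) ∈ M.δ (f u) a) (hGB : GoodBase M f u₀)
    {S S' : Finset (Fin n)} (hS : S.Nonempty) (hS' : S'.Nonempty) {p : Q}
    (hp : p ∈ ChkX f u₀ S)
    (hloopS : ∀ k ∈ S, ∃ V, LegsFlat S V ∧ SafeRun M p (legWord S k ++ V) p)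
    (hloopS' : ∀ k ∈ S', ∃ V, LegsFlat S' V ∧ SafeRun M p (legWord S' k ++ V) p)
    {k : Fin n} (hkS' : k ∈ S') (hkS : k ∉ S) : False := by
  obtain ⟨k₁, hk₁⟩ := hS
  obtain ⟨V₁', ⟨ks₁, hks₁, hVeq₁⟩, hrun₁⟩ := hloopS k₁ hk₁
  have hlegs : ∀ k' ∈ (k₁ :: ks₁), k' ∈ S := by
    intro k' hk'
    rcases List.mem_cons.mp hk' with rfl | h
    · exact hk₁
    · exact hks₁ k' h
  obtain ⟨Z, kl, hklS, hdec⟩ := legs_last S hlegs (by simp)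
  have hV₁ : legWord S k₁ ++ V₁' = Z ++ legWord S kl := by
    rw [hVeq₁] at hrun₁ ⊢
    have : ((k₁ :: ks₁).map (legWord S)).flatten = legWord S k₁ ++ (ks₁.map (legWord S)).flatten := by
      simp
    rw [← this, hdec]
  obtain ⟨V₂', hLegs₂, hrun₂⟩ := hloopS' k hkS'
  have hruntot : SafeRun M p ((Z ++ legWord S kl) ++ (legWord S' k ++ V₂')) p := by
    rw [← hV₁]
    exact hrun₁.append hrun₂
  obtain ⟨v, _, hfv⟩ := hp
  rw [← hfv] at hruntot
  have hVeq : (Z ++ legWord S kl) ++ (legWord S' k ++ V₂')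
      = (Z ++ [ltr kl]) ++ none :: ((xW S ++ [hsh, ltr k]) ++ none :: ((xW S' ++ [hsh]) ++ V₂')) := by
    simp [legWord, List.append_assoc]
  rw [hVeq] at hruntot
  exact splice_false M hL f hf0 hf (u₀ ++ v) (Z ++ [ltr kl]) (xW S ++ [hsh, ltr k])
    ((xW S' ++ [hsh]) ++ V₂') hruntot (not_none_mem_cword S k) (cword_not_Rn S k hkS)


lemma distinct_B (hL : M.Lang = LnC n) (hf0 : f [] ∈ M.init)
    (hf : ∀ u a, f (u ++ [a]) ∈ M.δ (f u) a)
    {S : Finset (Fin n)} (hS : S.Nonempty) {p : Q}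
    (hloopS : ∀ k ∈ S, ∃ V, LegsFlat S V ∧ SafeRun M p (legWord S k ++ V) p)
    {u' : List (Option (SigC n))} (hm : f u' = p)
    {S₀ : Finset (Fin n)} {k₀ : Fin n} {V' : List (Option (SigC n))}
    (hloopr : SafeRun M p ((xW S₀ ++ [hsh]) ++ (V' ++ [ltr k₀, none])) p) : False := by
  obtain ⟨k₁, hk₁⟩ := hS
  obtain ⟨V₁', _, hrun₁⟩ := hloopS k₁ hk₁
  have htot := hloopr.append hrun₁
  rw [← hm] at htot
  have hVeq : ((xW S₀ ++ [hsh]) ++ (V' ++ [ltr k₀, none])) ++ (legWord S k₁ ++ V₁')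
      = ((xW S₀ ++ [hsh]) ++ V' ++ [ltr k₀]) ++
        none :: (([ltr k₁] : List (Option (SigC n))) ++ none :: ((xW S ++ [hsh]) ++ V₁')) := by
    simp [legWord, List.append_assoc]
  rw [hVeq] at htot
  refine splice_false M hL f hf0 hf u' _ _ _ htot ?_ (single_not_Rn k₁)
  intro y hy
  rcases List.mem_singleton.mp hy with rfl
  simp [ltr]

end Chk2

lemma part2_main {n : ℕ} (hn : 1 ≤ n) (Q : Type) [Fintype Q]
    (M : tNCW (Option (SigC n)) Q) (hHD : M.HD) (hL : M.Lang = LnC n) :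
    2 ^ n ≤ Fintype.card Q := by
  classical
  obtain ⟨f, hf0, hf, hacc⟩ := hHD
  obtain ⟨u₀, hGB⟩ := exists_goodBase M hL f hacc
  have hq := fun (S : Finset (Fin n)) (hS : S.Nonempty) => qS_exists (M := M) hf hGB S hS
  set qS : ∀ S : Finset (Fin n), S.Nonempty → Q := fun S hS => Classical.choose (hq S hS)
    with hqSdef
  have hqmem : ∀ S hS, qS S hS ∈ ChkX f u₀ S := fun S hS => (Classical.choose_spec (hq S hS)).1
  have hloop : ∀ (S : Finset (Fin n)) (hS : S.Nonempty), ∀ k ∈ S,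
      ∃ V, LegsFlat S V ∧ SafeRun M (qS S hS) (legWord S k ++ V) (qS S hS) := by
    intro S hS k hk
    obtain ⟨hmem, hreach⟩ := Classical.choose_spec (hq S hS)
    obtain ⟨V, hlegs, hrun⟩ := reach_to_run hf hGB hS (hreach k hk)
    exact ⟨V, hlegs, (step_safeRun hf hGB hS hmem hk).append hrun⟩
  have hS₀ : (Finset.univ : Finset (Fin n)).Nonempty := ⟨⟨0, hn⟩, Finset.mem_univ _⟩
  set k₀ : Fin n := ⟨0, hn⟩ with hk₀def
  obtain ⟨v₀, hgc₀, hfv₀, hrA, hrB, _⟩ :=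
    nextq_spec (M := M) hf hGB hS₀ (hqmem Finset.univ hS₀) k₀ (Finset.mem_univ k₀)
  set m : Q := f ((u₀ ++ v₀) ++ [ltr k₀, none]) with hmdef
  obtain ⟨hmem₀, hreach₀⟩ := Classical.choose_spec (hq Finset.univ hS₀)
  obtain ⟨V', hlegs', hrunV'⟩ := reach_to_run hf hGB hS₀ (hreach₀ k₀ (Finset.mem_univ k₀))
  have hloopm : SafeRun M m ((xW Finset.univ ++ [hsh]) ++ (V' ++ [ltr k₀, none])) m := by
    have h1 : SafeRun M m (xW Finset.univ ++ [hsh])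
        (nextq f u₀ Finset.univ (qS Finset.univ hS₀) k₀) := hrB
    have h3 : SafeRun M (qS Finset.univ hS₀) [ltr k₀, none] m := hrA
    exact h1.append (hrunV'.append h3)
  set G : Finset (Fin n) → Q := fun S => if h : S.Nonempty then qS S h else m with hGdef
  have hGinj : Function.Injective G := by
    intro S S' hSS
    rw [hGdef] at hSS
    simp only [] at hSS
    by_cases h1 : S.Nonempty <;> by_cases h2 : S'.Nonempty
    · rw [dif_pos h1, dif_pos h2] at hSS
      by_contra hne
      have hsub : ¬ (S ⊆ S') ∨ ¬ (S' ⊆ S) := by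
        by_contra hc
        push_neg at hc
        exact hne (Finset.Subset.antisymm hc.1 hc.2)
      rcases hsub with h | h
      · -- ∃ k ∈ S, k ∉ S'
        obtain ⟨k, hkS, hkS'⟩ := Finset.not_subset.mp h
        refine distinct_A hL hf0 hf hGB h2 h1 (hqmem S' h2)
          (fun k' hk' => hloop S' h2 k' hk') ?_ hkS hkS'
        intro k' hk'
        have := hloop S h1 k' hk'
        rwa [hSS] at this
      · obtain ⟨k, hkS', hkS⟩ := Finset.not_subset.mp h
        refine distinct_A hL hf0 hf hGB h1 h2 (hqmem S h1)
          (fun k' hk' => hloop S h1 k' hk') ?_ hkS' hkS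
        intro k' hk'
        have := hloop S' h2 k' hk'
        rwa [← hSS] at this
    · exfalso
      rw [dif_pos h1, dif_neg h2] at hSS
      refine distinct_B hL hf0 hf h1 (fun k' hk' => hloop S h1 k' hk')
        (u' := (u₀ ++ v₀) ++ [ltr k₀, none]) (S₀ := Finset.univ) (k₀ := k₀) (V' := V') ?_ ?_
      · rw [← hmdef]
        exact hSS.symm
      · rw [← hSS] at hloopm
        exact hloopm
    · exfalso
      rw [dif_neg h1, dif_pos h2] at hSS
      refine distinct_B hL hf0 hf h2 (fun k' hk' => hloop S' h2 k' hk')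
        (u' := (u₀ ++ v₀) ++ [ltr k₀, none]) (S₀ := Finset.univ) (k₀ := k₀) (V' := V') ?_ ?_
      · rw [← hmdef]
        exact hSS
      · rw [hSS] at hloopm
        exact hloopm
    · rw [Finset.not_nonempty_iff_eq_empty.mp h1, Finset.not_nonempty_iff_eq_empty.mp h2]
  have hcard := Fintype.card_le_of_injective G hGinj
  rwa [Fintype.card_finset, Fintype.card_fin] at hcard



section Part1

variable {n : ℕ}

inductive StQ (n : ℕ) : Type
  | A : Fin n → StQ n
  | B : Fin n → StQ n
  | C : Fin n → StQ n
  | D : StQ n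
  | T : StQ n
  | E : StQ n

open StQ

def stEquiv (n : ℕ) : StQ n ≃ (Fin n × Fin 3) ⊕ Fin 3 where
  toFun q := match q with
    | .A i => Sum.inl (i, 0)
    | .B i => Sum.inl (i, 1)
    | .C i => Sum.inl (i, 2)
    | .D => Sum.inr 0
    | .T => Sum.inr 1
    | .E => Sum.inr 2
  invFun x := match x with
    | Sum.inl (i, ⟨0, _⟩) => .A i
    | Sum.inl (i, ⟨1, _⟩) => .B i
    | Sum.inl (i, ⟨2, _⟩) => .C i
    | Sum.inr ⟨0, _⟩ => .D
    | Sum.inr ⟨1, _⟩ => .T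
    | Sum.inr ⟨2, _⟩ => .E
  left_inv q := by cases q <;> rfl
  right_inv x := by
    rcases x with ⟨i, ⟨s, hs⟩⟩ | ⟨d, hd⟩
    · interval_cases s <;> rfl
    · interval_cases d <;> rfl

noncomputable instance (n : ℕ) : Fintype (StQ n) := Fintype.ofEquiv _ (stEquiv n).symm

lemma card_StQ (n : ℕ) : Fintype.card (StQ n) = 3 * n + 3 := by
  rw [Fintype.card_congr (stEquiv n)]
  simp only [Fintype.card_sum, Fintype.card_prod, Fintype.card_fin]
  omega

/-- The safe (non-α) transitions of the SD automaton. -/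
def safeB : StQ n → Option (SigC n) → Set (StQ n)
  | .A i, some (Sum.inl j) => if j = i then {.B i} else {.A i}
  | .A _, some (Sum.inr _) => ∅
  | .A _, none => ∅
  | .B i, some (Sum.inl _) => {.B i}
  | .B i, some (Sum.inr _) => {.C i}
  | .B _, none => ∅
  | .C i, some (Sum.inl j) => if j = i then {.D} else ∅
  | .C _, some (Sum.inr _) => ∅
  | .C _, none => ∅
  | .D, none => Set.range (fun k : Fin n => .A k)
  | .D, some _ => ∅
  | .T, some _ => {.T}
  | .T, none => ∅
  | .E, _ => ∅

/-- The SD automaton recognizing `L_n` with `3n+3` states. -/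
def MB (n : ℕ) : tNCW (Option (SigC n)) (StQ n) where
  init := {.T}
  δ := fun q a => (safeB q a ∪ {.T}) ∪
    (if a = none then Set.range (fun k : Fin n => StQ.A k) else ∅)
  α := {t | t.2.2 ∉ safeB t.1 t.2.1}
  init_nonempty := ⟨.T, rfl⟩
  δ_nonempty := fun q a => ⟨.T, Or.inl (Or.inr rfl)⟩

lemma T_mem_δ (q : StQ n) (a : Option (SigC n)) : .T ∈ (MB n).δ q a :=
  Or.inl (Or.inr rfl)

lemma A_mem_δ_none (q : StQ n) (k : Fin n) : .A k ∈ (MB n).δ q none := by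
  right
  simp

lemma safe_mem_δ {q q' : StQ n} {a : Option (SigC n)} (h : q' ∈ safeB q a) :
    q' ∈ (MB n).δ q a := Or.inl (Or.inl h)

lemma not_α_iff {q q' : StQ n} {a : Option (SigC n)} :
    (q, a, q') ∉ (MB n).α ↔ q' ∈ safeB q a := by
  simp [MB]

lemma srStep {q q' : StQ n} {a : Option (SigC n)} (h : q' ∈ safeB q a) :
    SafeRun (MB n) q [a] q' := by
  refine ⟨fun t => if t = 0 then q else q', by simp, by simp, ?_⟩
  intro t ht
  simp only [List.length_singleton] at ht
  have : t = 0 := by omega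
  subst this
  simp only [if_pos rfl, if_neg (by omega : (1 : ℕ) ≠ 0)]
  have hg : ([a] : List (Option (SigC n)))[0] = a := rfl
  rw [hg]
  exact ⟨safe_mem_δ h, not_α_iff.mpr h⟩

lemma runB (i : Fin n) (y : List (Fin n)) :
    SafeRun (MB n) (.B i) (y.map (fun j => some (Sum.inl j))) (.B i) := by
  induction y with
  | nil => exact SafeRun.nil _ _
  | cons j y ih =>
    have h1 : SafeRun (MB n) (.B i) [some (Sum.inl j)] (.B i) := srStep (by simp [safeB])
    have := h1.append ih
    simpa using this

lemma runA_to_D (i : Fin n) (y : List (Fin n)) (hiy : i ∈ y) :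
    SafeRun (MB n) (.A i) ((y.map (fun j => some (Sum.inl j))) ++
      [some (Sum.inr ()), some (Sum.inl i)]) .D := by
  induction y with
  | nil => simp at hiy
  | cons j y ih =>
    by_cases hj : j = i
    · subst hj
      have h1 : SafeRun (MB n) (.A j) [some (Sum.inl j)] (.B j) := srStep (by simp [safeB])
      have h2 := runB j y
      have h3 : SafeRun (MB n) (.B j) [some (Sum.inr ())] (.C j) := srStep (by simp [safeB])
      have h4 : SafeRun (MB n) (.C j) [some (Sum.inl j)] .D := srStep (by simp [safeB])
      have := h1.append (h2.append (h3.append h4))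
      simpa using this
    · have hiy' : i ∈ y := by
        rcases List.mem_cons.mp hiy with h | h
        · exact absurd h.symm hj
        · exact h
      have h1 : SafeRun (MB n) (.A i) [some (Sum.inl j)] (.A i) := srStep (by
        simp only [safeB]
        rw [if_neg hj]
        rfl)
      have := h1.append (ih hiy')
      simpa using this


lemma SafeRun_nil_eq {A Q : Type} {M : tNCW A Q} {q q' : Q} (h : SafeRun M q [] q') :
    q = q' := by
  obtain ⟨p, h0, he, _⟩ := h
  rw [← h0]
  exact he

lemma SafeRun_cons {A Q : Type} {M : tNCW A Q} {q q' : Q} {a : A} {l : List A}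
    (h : SafeRun M q (a :: l) q') :
    ∃ q₁, ((q, a, q₁) ∉ M.α ∧ q₁ ∈ M.δ q a) ∧ SafeRun M q₁ l q' := by
  obtain ⟨p, h0, he, hs⟩ := h
  have h00 := hs 0 (by simp)
  have hg : (a :: l)[0] = a := rfl
  rw [hg, h0] at h00
  refine ⟨p 1, ⟨h00.2, h00.1⟩, fun t => p (t + 1), rfl, ?_, ?_⟩
  · simpa using he
  · intro t ht
    have := hs (t + 1) (by simp; omega)
    simpa using this

lemma safeB_A_inv {i : Fin n} {a : Option (SigC n)} {q' : StQ n}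
    (h : q' ∈ safeB (.A i) a) :
    ∃ b, a = some (Sum.inl b) ∧ ((b = i ∧ q' = .B i) ∨ (b ≠ i ∧ q' = .A i)) := by
  match a with
  | some (Sum.inl b) =>
    refine ⟨b, rfl, ?_⟩
    by_cases hb : b = i
    · left
      refine ⟨hb, ?_⟩
      simp only [safeB, if_pos hb] at h
      exact h
    · right
      refine ⟨hb, ?_⟩
      simp only [safeB, if_neg hb] at h
      exact h
  | some (Sum.inr u) => simp [safeB] at h
  | none => simp [safeB] at h

lemma safeB_B_inv {i : Fin n} {a : Option (SigC n)} {q' : StQ n}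
    (h : q' ∈ safeB (.B i) a) :
    (∃ b, a = some (Sum.inl b) ∧ q' = .B i) ∨ (a = some (Sum.inr ()) ∧ q' = .C i) := by
  match a with
  | some (Sum.inl b) =>
    left
    refine ⟨b, rfl, ?_⟩
    simpa [safeB] using h
  | some (Sum.inr u) =>
    right
    simp only [safeB] at h
    exact ⟨rfl, h⟩
  | none => simp [safeB] at h

lemma safeB_C_inv {i : Fin n} {a : Option (SigC n)} {q' : StQ n}
    (h : q' ∈ safeB (.C i) a) : a = some (Sum.inl i) ∧ q' = .D := by
  match a with
  | some (Sum.inl b) =>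
    by_cases hb : b = i
    · subst hb
      simp only [safeB, if_pos rfl] at h
      exact ⟨rfl, h⟩
    · simp only [safeB, if_neg hb] at h
      exact absurd h (Set.notMem_empty _)
  | some (Sum.inr u) => simp [safeB] at h
  | none => simp [safeB] at h

lemma safeB_D_inv {a : Option (SigC n)} {q' : StQ n}
    (h : q' ∈ safeB .D a) : a = none ∧ ∃ k, q' = .A k := by
  match a with
  | some x => simp [safeB] at h
  | none =>
    refine ⟨rfl, ?_⟩
    obtain ⟨k, hk⟩ := h
    exact ⟨k, hk.symm⟩

lemma safeB_none_inv {q q' : StQ n} (h : q' ∈ safeB q none) :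
    q = .D ∧ ∃ k, q' = .A k := by
  cases q with
  | A i => simp [safeB] at h
  | B i => simp [safeB] at h
  | C i => simp [safeB] at h
  | D => exact ⟨rfl, (safeB_D_inv h).2⟩
  | T => simp [safeB] at h
  | E => simp [safeB] at h

lemma runC_classify {j : Fin n} {l : List (Option (SigC n))}
    (hnone : ∀ x ∈ l, x ≠ none) (h : SafeRun (MB n) (.C j) l .D) :
    l = [some (Sum.inl j)] := by
  cases l with
  | nil => exact absurd (SafeRun_nil_eq h) (by simp)
  | cons a l' =>
    obtain ⟨q₁, ⟨hα, _⟩, hrest⟩ := SafeRun_cons h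
    have hsafe := not_α_iff.mp hα
    obtain ⟨ha, hq₁⟩ := safeB_C_inv hsafe
    subst ha hq₁
    cases l' with
    | nil => rfl
    | cons a' l'' =>
      obtain ⟨q₂, ⟨hα₂, _⟩, _⟩ := SafeRun_cons hrest
      have hsafe₂ := not_α_iff.mp hα₂
      obtain ⟨ha', _⟩ := safeB_D_inv hsafe₂
      exact absurd ha' (hnone a' (by simp))

lemma runB_classify {j : Fin n} {l : List (Option (SigC n))}
    (hnone : ∀ x ∈ l, x ≠ none) (h : SafeRun (MB n) (.B j) l .D) :
    ∃ y2 : List (Fin n),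
      l = y2.map (fun b => some (Sum.inl b)) ++ [some (Sum.inr ()), some (Sum.inl j)] := by
  induction l with
  | nil => exact absurd (SafeRun_nil_eq h) (by simp)
  | cons a l' ih =>
    obtain ⟨q₁, ⟨hα, _⟩, hrest⟩ := SafeRun_cons h
    have hsafe := not_α_iff.mp hα
    rcases safeB_B_inv hsafe with ⟨b, ha, hq₁⟩ | ⟨ha, hq₁⟩
    · subst ha hq₁
      obtain ⟨y2, hy2⟩ := ih (fun x hx => hnone x (by simp [hx])) hrest
      exact ⟨b :: y2, by simp [hy2]⟩
    · subst ha hq₁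
      have := runC_classify (fun x hx => hnone x (by simp [hx])) hrest
      rw [this]
      exact ⟨[], by simp⟩

lemma runA_classify {j : Fin n} {l : List (Option (SigC n))}
    (hnone : ∀ x ∈ l, x ≠ none) (h : SafeRun (MB n) (.A j) l .D) :
    ∃ y : List (Fin n), y ≠ [] ∧ j ∈ y ∧
      l = y.map (fun b => some (Sum.inl b)) ++ [some (Sum.inr ()), some (Sum.inl j)] := by
  induction l with
  | nil => exact absurd (SafeRun_nil_eq h) (by simp)
  | cons a l' ih =>
    obtain ⟨q₁, ⟨hα, _⟩, hrest⟩ := SafeRun_cons h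
    have hsafe := not_α_iff.mp hα
    obtain ⟨b, ha, hcase⟩ := safeB_A_inv hsafe
    subst ha
    rcases hcase with ⟨hb, hq₁⟩ | ⟨hb, hq₁⟩
    · subst hb hq₁
      obtain ⟨y2, hy2⟩ := runB_classify (fun x hx => hnone x (by simp [hx])) hrest
      exact ⟨b :: y2, by simp, by simp, by simp [hy2]⟩
    · subst hq₁
      obtain ⟨y, hy0, hjy, hyeq⟩ := ih (fun x hx => hnone x (by simp [hx])) hrest
      exact ⟨b :: y, by simp, by simp [hjy], by simp [hyeq]⟩


lemma MB_sound (q : StQ n) : (MB n).LangFrom q ⊆ LnC n := by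
  intro w hw
  obtain ⟨r, hr0, hδ, hev⟩ := hw
  rw [Filter.eventually_atTop] at hev
  obtain ⟨N, hN⟩ := hev
  have hsafe : ∀ i, N ≤ i → r (i + 1) ∈ safeB (r i) (w i) := fun i hi =>
    not_α_iff.mp (hN i hi)
  intro hinf
  have hfind : ∀ s : ℕ, ∃ i, s ≤ i ∧ w i = none := hinf
  classical
  set d : ℕ → ℕ := fun k =>
    Nat.rec (Nat.find (hfind N)) (fun _ prev => Nat.find (hfind (prev + 1))) k with hddef
  have hd0 : N ≤ d 0 ∧ w (d 0) = none := Nat.find_spec (hfind N)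
  have hdsucc : ∀ k, d k + 1 ≤ d (k + 1) ∧ w (d (k + 1)) = none := fun k =>
    Nat.find_spec (hfind (d k + 1))
  have hdN : ∀ k, N ≤ d k := by
    intro k
    induction k with
    | zero => exact hd0.1
    | succ k ih => have := (hdsucc k).1; omega
  have hdnone : ∀ k, w (d k) = none := by
    intro k
    cases k with
    | zero => exact hd0.2
    | succ k => exact (hdsucc k).2
  have hdmono : StrictMono d := by
    apply strictMono_nat_of_lt_succ
    intro k
    have := (hdsucc k).1
    omega
  have hbetween : ∀ k i, d k < i → i < d (k + 1) → w i ≠ none := by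
    intro k i h1 h2 hwi
    have := Nat.find_min (hfind (d k + 1)) h2
    push_neg at this
    have := this (by omega)
    exact this hwi
  have hstD : ∀ i, N ≤ i → w i = none → r i = .D ∧ ∃ kk, r (i + 1) = .A kk := by
    intro i hi hwi
    have := hsafe i hi
    rw [hwi] at this
    exact safeB_none_inv this
  refine ⟨d, hdmono, ?_⟩
  intro k
  refine ⟨hdnone k, ?_⟩
  set len := d (k + 1) - (d k + 1) with hlendef
  obtain ⟨kk, hA⟩ := (hstD (d k) (hdN k) (hdnone k)).2
  have hD : r (d (k + 1)) = .D := (hstD (d (k + 1)) (hdN (k + 1)) (hdnone (k + 1))).1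
  have hseg : SafeRun (MB n) (r (d k + 1))
      (List.ofFn fun t : Fin len => w (d k + 1 + t)) (r (d k + 1 + len)) := by
    apply safeRun_of_run
    intro t ht
    have hpos : N ≤ d k + t := by have := hdN k; omega
    refine ⟨?_, ?_⟩
    · have := hδ (d k + 1 + t)
      simpa [Nat.add_assoc, Nat.add_comm, Nat.add_left_comm] using this
    · have := hN (d k + 1 + t) (by omega)
      simpa [Nat.add_assoc, Nat.add_comm, Nat.add_left_comm] using this
  have hdlt : d k < d (k + 1) := hdmono (lt_add_one k)
  have hend : d k + 1 + len = d (k + 1) := by omega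
  rw [hA, hend, hD] at hseg
  have hnonefree : ∀ x ∈ (List.ofFn fun t : Fin len => w (d k + 1 + t)), x ≠ none := by
    intro x hx
    obtain ⟨t, ht⟩ := List.mem_ofFn.mp hx
    rw [← ht]
    apply hbetween k (d k + 1 + t.1)
    · omega
    · have := t.2; omega
  obtain ⟨y, hy0, hky, hyeq⟩ := runA_classify hnonefree hseg
  refine ⟨y.map Sum.inl ++ [Sum.inr (), Sum.inl kk], ⟨y, kk, hy0, hky, rfl⟩, ?_⟩
  rw [hyeq]
  simp

lemma MB_complete (q : StQ n) : LnC n ⊆ (MB n).LangFrom q := by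
  intro w hw
  classical
  by_cases hinf : ∀ N, ∃ i, N ≤ i ∧ w i = none
  · obtain ⟨g, hg, hgs⟩ := hw hinf
    choose xs hxsR hxseq using fun k => (hgs k).2
    choose ys is hy0 hiy hdec using hxsR
    have hwg : ∀ k, w (g k) = none := fun k => (hgs k).1
    have hrun : ∀ k, SafeRun (MB n) (.A (is k)) ((xs k).map some) .D := by
      intro k
      rw [hdec k]
      have he : (ys k ++ [is k] : List (Fin n)) = ys k ++ [is k] := rfl
      have : ((ys k).map Sum.inl ++ [Sum.inr (), Sum.inl (is k)]).map
          (some : SigC n → Option (SigC n)) =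
          ((ys k).map (fun j => some (Sum.inl j))) ++
            [some (Sum.inr ()), some (Sum.inl (is k))] := by
        simp
      rw [this]
      exact runA_to_D (is k) (ys k) (hiy k)
    choose pf hp0 hpe hps using hrun
    have hlen : ∀ k, g (k + 1) - (g k + 1) = (xs k).length := by
      intro k
      have := congrArg List.length (hxseq k)
      simpa using this
    have hglt : ∀ k, g k < g (k + 1) := fun k => hg (lt_add_one k)
    have hgadd : ∀ k, g k + 1 + (xs k).length = g (k + 1) := by
      intro k
      have h1 := hlen k
      have h2 := hglt k
      omega
    have hval : ∀ k t, t < (xs k).length →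
        w (g k + 1 + t) = ((xs k).map some).getD t none := by
      intro k t ht
      have e := congrArg (fun l => l.getD t none) (hxseq k)
      rw [List.getD_eq_getElem _ _ (by simp only [List.length_ofFn]; have := hlen k; omega)] at e
      rw [List.getElem_ofFn] at e
      rw [← e]
    set P : ℕ → ℕ → Prop := fun m j => g j < m with hPdef
    set r : StQ n → ℕ → StQ n := fun q₀ m =>
      if m = 0 then q₀ else if m ≤ g 0 then .T else
        pf (Nat.findGreatest (P m) m) (m - (g (Nat.findGreatest (P m) m) + 1)) with hrdef
    have hKval : ∀ k m, g k < m → m ≤ g (k + 1) → Nat.findGreatest (P m) m = k := by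
      intro k m h1 h2
      have hkm : k ≤ m := le_of_lt (lt_of_le_of_lt hg.le_apply h1)
      have hge : k ≤ Nat.findGreatest (P m) m := Nat.le_findGreatest hkm h1
      have hle : Nat.findGreatest (P m) m ≤ k := by
        by_contra hc
        push_neg at hc
        have hPK : P m (Nat.findGreatest (P m) m) := Nat.findGreatest_spec hkm h1
        have : Nat.findGreatest (P m) m < k + 1 := hg.lt_iff_lt.mp (lt_of_lt_of_le hPK h2)
        omega
      omega
    have hr_at : ∀ k m, g k < m → m ≤ g (k + 1) → r q m = pf k (m - (g k + 1)) := by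
      intro k m h1 h2
      have hm0 : m ≠ 0 := by omega
      have hg0k : g 0 ≤ g k := hg.monotone (Nat.zero_le k)
      have hmg0 : ¬ (m ≤ g 0) := by omega
      rw [hrdef]
      simp only [if_neg hm0, if_neg hmg0, hKval k m h1 h2]
    have hstep : ∀ m, r q (m + 1) ∈ (MB n).δ (r q m) (w m) ∧
        (g 0 < m → (r q m, w m, r q (m + 1)) ∉ (MB n).α) := by
      intro m
      rcases lt_trichotomy m (g 0) with hm | hm | hm
      · have h1 : r q (m + 1) = .T := by
          rw [hrdef]
          simp only [if_neg (by omega : m + 1 ≠ 0), if_pos (by omega : m + 1 ≤ g 0)]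
        rw [h1]
        exact ⟨T_mem_δ _ _, fun hc => absurd hc (by omega)⟩
      · have h1 : r q (m + 1) = .A (is 0) := by
          have h := hr_at 0 (m + 1) (by omega) (by have := hglt 0; omega)
          rw [h, hm, show g 0 + 1 - (g 0 + 1) = 0 by omega]
          exact hp0 0
        rw [h1, hm, hwg 0]
        exact ⟨A_mem_δ_none _ _, fun hc => absurd hc (by omega)⟩
      · have hPm : g 0 < m := hm
        set K := Nat.findGreatest (P m) m with hKdef
        have hP0 : P m 0 := hPm
        have hKP : P m K := Nat.findGreatest_spec (Nat.zero_le m) hP0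
        have hKub : m ≤ g (K + 1) := by
          by_contra hc
          push_neg at hc
          have hK1m : K + 1 ≤ m := le_of_lt (lt_of_le_of_lt hg.le_apply hc)
          have := Nat.findGreatest_is_greatest (by omega : K < K + 1) hK1m
          exact this hc
        have hrm : r q m = pf K (m - (g K + 1)) := hr_at K m hKP hKub
        rcases eq_or_lt_of_le hKub with heq | hlt
        · -- m = g (K+1) : the $ transition
          have hrm' : r q m = .D := by
            rw [hrm]
            have hlm : m - (g K + 1) = ((xs K).map some).length := by
              have := hlen K
              simp only [List.length_map]
              omega
            rw [hlm]
            exact hpe K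
          have hr1 : r q (m + 1) = .A (is (K + 1)) := by
            have h2 : m + 1 ≤ g (K + 2) := by
              have h3 : g (K + 1) < g (K + 2) := hglt (K + 1)
              omega
            have h := hr_at (K + 1) (m + 1) (by omega) h2
            rw [h, heq, show g (K + 1) + 1 - (g (K + 1) + 1) = 0 by omega]
            exact hp0 (K + 1)
          have hwm : w m = none := by rw [heq]; exact hwg (K + 1)
          rw [hrm', hr1, hwm]
          have hsafe : (StQ.A (is (K + 1)) : StQ n) ∈ safeB .D none := ⟨is (K + 1), rfl⟩
          exact ⟨safe_mem_δ hsafe, fun _ => not_α_iff.mpr hsafe⟩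
        · -- within the segment
          set t := m - (g K + 1) with htdef
          have ht : t < (xs K).length := by
            have := hlen K
            omega
          have hr1 : r q (m + 1) = pf K (t + 1) := by
            have := hr_at K (m + 1) (by omega) (by omega)
            rw [this]
            congr 1
            omega
          have hstep' := hps K t (by simpa using ht)
          have hwm : w m = ((xs K).map some)[t]'(by simpa using ht) := by
            have := hval K t ht
            rw [List.getD_eq_getElem _ _ (by simpa using ht)] at this
            rw [show m = g K + 1 + t by omega]
            exact this
          rw [hrm, hr1, hwm]
          exact ⟨hstep'.1, fun _ => hstep'.2⟩
    refine ⟨r q, ?_, fun m => (hstep m).1, ?_⟩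
    · simp [hrdef]
    · rw [Filter.eventually_atTop]
      exact ⟨g 0 + 1, fun m hm => (hstep m).2 (by omega)⟩
  · push_neg at hinf
    obtain ⟨N, hNi⟩ := hinf
    refine ⟨fun m => if m = 0 then q else .T, by simp, ?_, ?_⟩
    · intro i
      show (if i + 1 = 0 then q else StQ.T) ∈ (MB n).δ (if i = 0 then q else StQ.T) (w i)
      rw [if_neg (by omega : ¬ (i + 1 = 0))]
      exact T_mem_δ _ _
    · rw [Filter.eventually_atTop]
      refine ⟨N + 1, ?_⟩
      intro i hi
      show ((if i = 0 then q else StQ.T), w i, (if i + 1 = 0 then q else StQ.T)) ∉ (MB n).α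
      rw [if_neg (by omega : ¬ (i = 0)), if_neg (by omega : ¬ (i + 1 = 0))]
      have hwi : w i ≠ none := hNi i (by omega)
      obtain ⟨a, ha⟩ := Option.ne_none_iff_exists'.mp hwi
      rw [ha]
      apply not_α_iff.mpr
      simp [safeB]

lemma MB_langFrom (q : StQ n) : (MB n).LangFrom q = LnC n :=
  Set.Subset.antisymm (MB_sound q) (MB_complete q)

lemma MB_lang : (MB n).Lang = LnC n := by
  ext w
  constructor
  · rintro ⟨q, _, hq⟩
    exact MB_langFrom q ▸ hq
  · intro hw
    exact ⟨.T, rfl, (MB_langFrom .T).symm ▸ hw⟩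

lemma MB_SD : (MB n).SD := by
  constructor
  · intro q₁ _ q₂ _
    rw [MB_langFrom, MB_langFrom]
  · intro q a q₁ _ q₂ _
    rw [MB_langFrom, MB_langFrom]

end Part1
end SDP

/-- `L_n` is recognized by an SD-tNCW with `3n+3` states, yet every
history-deterministic tNCW recognizing `L_n` has at least `2^n` states. -/
theorem sd_tncw_succinct (n : ℕ) (hn : 1 ≤ n) :
    (∃ (Q : Type) (_ : Fintype Q) (M : tNCW (Option (SigC n)) Q),
        Fintype.card Q = 3 * n + 3 ∧ M.SD ∧ M.Lang = LnC n) ∧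
    (∀ (Q : Type) (_ : Fintype Q) (M : tNCW (Option (SigC n)) Q),
        M.HD → M.Lang = LnC n → 2 ^ n ≤ Fintype.card Q) := by
  constructor
  · exact ⟨SDP.StQ n, inferInstance, SDP.MB n, SDP.card_StQ n, SDP.MB_SD, SDP.MB_lang⟩
  · intro Q inst M hHD hL
    exact @SDP.part2_main n hn Q inst M hHD hL
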